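/- In the setting of Theorem 4.1, suppose f(x) = g(A_0(x)) + Σ_{t=1}^{d−1} u_t A_t(x)^{m_t} is a permutation of F_{q^d}, and let r_i be positive integers with m_i r_i ≡ 1 (mod d(q−1)) and g⁻¹ the compositional inverse of g on F_q. Then f⁻¹(x) = (1/d)·( g⁻¹(A_0(x)/d) + Σ_{i=1}^{d−1} ω^i (d u_i ω^{−j})^{−r_i} A_j(x)^{r_i} ), where for each i, j is the unique index in {1,…,d−1} with j ≡ i·m_i (mod d). -/

import Mathlib

/-- Theorem 4.1 (inverse formula): under the permutation conditions,
`f⁻¹(x) = (1/d)·( g⁻¹(A_0(x)/d) + Σ_{i=1}^{d-1} ω^i (d u_i ω^{-j})^{-r_i} A_j(x)^{r_i} )`,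
where `j ≡ i·m_i (mod d)`, `1 ≤ j ≤ d-1`. -/
theorem pp_inverse_formula (K L : Type) [Field K] [Fintype K] [Field L] [Fintype L] [Algebra K L]
    (d : ℕ) (hd : 1 < d) (hL : Fintype.card L = Fintype.card K ^ d)
    (hq : Fintype.card K % d = 1)
    (ω : K) (hω : orderOf ω = d)
    (A : ℕ → L → L)
    (hA : ∀ i x, A i x =
      ∑ t ∈ Finset.range d, algebraMap K L (ω ^ (i * t)) * x ^ Fintype.card K ^ (d - 1 - t))
    (m : ℕ → ℕ) (hm : ∀ i, 1 ≤ i → i ≤ d - 1 → 0 < m i)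
    (u : ℕ → K) (g : Polynomial K)
    (f : L → L)
    (hf : ∀ x : L, f x =
      Polynomial.aeval (A 0 x) g +
        ∑ t ∈ Finset.Icc 1 (d - 1), algebraMap K L (u t) * A t x ^ m t)
    (hcrs : Function.Bijective (fun i : Fin d => (((i : ℕ) * m (i : ℕ) : ℕ) : ZMod d)))
    (hu : ∀ i, 1 ≤ i → i ≤ d - 1 → u i ≠ 0)
    (hgcd : Nat.gcd (∏ i ∈ Finset.Icc 1 (d - 1), m i) (Fintype.card K - 1) = 1)
    (hgbij : Function.Bijective (fun c : K => Polynomial.eval c g))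
    (hfbij : Function.Bijective f)
    (r : ℕ → ℕ)
    (hr : ∀ i, 1 ≤ i → i ≤ d - 1 →
      0 < r i ∧ m i * r i % (d * (Fintype.card K - 1)) = 1 % (d * (Fintype.card K - 1)))
    (j : ℕ → ℕ)
    (hj : ∀ i, 1 ≤ i → i ≤ d - 1 →
      1 ≤ j i ∧ j i ≤ d - 1 ∧ ((j i : ZMod d) = ((i * m i : ℕ) : ZMod d)))
    (ginv : Polynomial K)
    (hginv : ∀ c : K, Polynomial.eval (Polynomial.eval c g) ginv = c)
    (finv : L → L)
    (hfinvdef : ∀ x : L, finv x =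
      (d : L)⁻¹ *
        (Polynomial.aeval (A 0 x / (d : L)) ginv +
          ∑ i ∈ Finset.Icc 1 (d - 1),
            algebraMap K L (ω ^ i) *
              (algebraMap K L ((d : K) * u i * (ω ^ (j i))⁻¹))⁻¹ ^ r i *
              A (j i) x ^ r i)) :
    Function.LeftInverse finv f ∧ Function.RightInverse finv f := by
  classical
  have hq2 : 1 < Fintype.card K := Fintype.one_lt_card
  set q := Fintype.card K with hqdef
  obtain ⟨p, hcp⟩ := CharP.exists K
  haveI : CharP K p := hcp
  obtain ⟨n, hpp, hcard⟩ := FiniteField.card K p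
  rw [← hqdef] at hcard
  haveI : Fact p.Prime := ⟨hpp⟩
  haveI : CharP L p := charP_of_injective_algebraMap (algebraMap K L).injective p
  -- d divides q - 1
  have hdq : d ∣ q - 1 := ⟨q / d, by have := Nat.div_add_mod q d; omega⟩
  have hpd : ¬ p ∣ d := by
    intro hpd
    have h1 : p ∣ q := by
      rw [hcard]; exact dvd_pow_self p (by exact_mod_cast n.pos.ne')
    have h2 : p ∣ q - 1 := hpd.trans hdq
    have h3 : p ∣ 1 := by
      have := Nat.dvd_sub h1 h2
      rwa [show q - (q - 1) = 1 by omega] at this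
    have h4 := Nat.le_of_dvd one_pos h3
    have h5 := hpp.two_le
    omega
  have hdK : (d : K) ≠ 0 := fun h => hpd ((CharP.cast_eq_zero_iff K p d).mp h)
  have hdL : (d : L) ≠ 0 := fun h => hpd ((CharP.cast_eq_zero_iff L p d).mp h)
  -- ω facts
  have hωd : ω ^ d = 1 := by rw [← hω]; exact pow_orderOf_eq_one ω
  have hωne : ω ≠ 0 := by
    intro h
    rw [h, zero_pow (by omega : d ≠ 0)] at hωd
    exact zero_ne_one hωd
  have hωred : ∀ a : ℕ, ω ^ a = ω ^ (a % d) := by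
    intro a
    conv_lhs => rw [← Nat.div_add_mod a d]
    rw [pow_add, pow_mul, hωd, one_pow, one_mul]
  have hωmod : ∀ a b : ℕ, a % d = b % d → ω ^ a = ω ^ b := by
    intro a b hab
    rw [hωred a, hωred b, hab]
  have hωmod' : ∀ a b : ℕ, ω ^ a = ω ^ b → a % d = b % d := by
    have key : ∀ a b : ℕ, a % d < b % d → ω ^ a ≠ ω ^ b := by
      intro a b hlt hab
      rw [hωred a, hωred b] at hab
      have h1 : ω ^ (b % d - a % d) * ω ^ (a % d) = 1 * ω ^ (a % d) := by
        rw [← pow_add, show b % d - a % d + a % d = b % d from by omega, one_mul, hab]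
      have h2 := mul_right_cancel₀ (pow_ne_zero _ hωne) h1
      have h3 : orderOf ω ∣ (b % d - a % d) := orderOf_dvd_of_pow_eq_one h2
      rw [hω] at h3
      have h4 := Nat.le_of_dvd (by omega) h3
      have h5 : b % d < d := Nat.mod_lt _ (by omega)
      omega
    intro a b hab
    rcases Nat.lt_trichotomy (a % d) (b % d) with h | h | h
    · exact absurd hab (key a b h)
    · exact h
    · exact absurd hab.symm (key b a h)
  have hωone : ∀ a : ℕ, a % d = 0 → ω ^ a = 1 := by
    intro a ha
    have := hωmod a 0 (by simpa using ha)
    simpa using this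
  -- Frobenius
  have hqpow : ∀ s : ℕ, q ^ s = p ^ ((n : ℕ) * s) := fun s => by rw [hcard, ← pow_mul]
  have hΨdef : ∀ (s : ℕ) (y : L), iterateFrobenius L p ((n : ℕ) * s) y = y ^ q ^ s := by
    intro s y; rw [iterateFrobenius_def, ← hqpow]
  have hfixK : ∀ (s : ℕ) (c : K), (algebraMap K L c) ^ q ^ s = algebraMap K L c := by
    intro s c
    rw [← map_pow]
    congr 1
    exact FiniteField.pow_card_pow s c
  have hfixK1 : ∀ c : K, (algebraMap K L c) ^ q = algebraMap K L c := by
    intro c; have := hfixK 1 c; rwa [pow_one] at this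
  have hfixL : ∀ z : L, z ^ q ^ d = z := by
    intro z
    calc z ^ q ^ d = z ^ Fintype.card L := by rw [hL]
      _ = z := FiniteField.pow_card z
  have hqadd : ∀ (s : ℕ) (y z : L), (y + z) ^ q ^ s = y ^ q ^ s + z ^ q ^ s := by
    intro s y z
    rw [← hΨdef, ← hΨdef, ← hΨdef, map_add]
  -- additivity of A
  have hAadd : ∀ i (y z : L), A i (y + z) = A i y + A i z := by
    intro i y z
    simp only [hA]
    rw [← Finset.sum_add_distrib]
    refine Finset.sum_congr rfl fun t _ => ?_
    rw [hqadd, mul_add]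
  have hAzero : ∀ i, A i 0 = 0 := by
    intro i
    rw [hA]
    refine Finset.sum_eq_zero fun t _ => ?_
    rw [zero_pow (pow_pos (by omega) _).ne', mul_zero]
  have hAsum : ∀ i (s : Finset ℕ) (h : ℕ → L),
      A i (∑ t ∈ s, h t) = ∑ t ∈ s, A i (h t) := by
    intro i s h
    induction s using Finset.induction with
    | empty => simpa using hAzero i
    | insert _ _ hx ih => rw [Finset.sum_insert hx, Finset.sum_insert hx, hAadd, ih]
  have hAsmul : ∀ i (c : K) (z : L), A i (algebraMap K L c * z) = algebraMap K L c * A i z := by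
    intro i c z
    simp only [hA, Finset.mul_sum]
    refine Finset.sum_congr rfl fun t _ => ?_
    rw [mul_pow, hfixK]
    ring
  have hqadd1 : ∀ y z : L, (y + z) ^ q = y ^ q + z ^ q := by
    intro y z
    have := hqadd 1 y z
    simpa [pow_one] using this
  have hqsum : ∀ (s : Finset ℕ) (h : ℕ → L), (∑ t ∈ s, h t) ^ q = ∑ t ∈ s, (h t) ^ q := by
    intro s h
    induction s using Finset.induction with
    | empty => simp [zero_pow (show q ≠ 0 from by omega)]
    | insert _ _ hx ih => rw [Finset.sum_insert hx, Finset.sum_insert hx, hqadd1, ih]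
  -- eigenvalue property
  have heig : ∀ i (x : L), A i x ^ q = algebraMap K L (ω ^ i) * A i x := by
    intro i x
    have h1 : A i x ^ q = ∑ t ∈ Finset.range d, algebraMap K L (ω ^ (i * t)) * x ^ q ^ (d - t) := by
      rw [hA, hqsum]
      refine Finset.sum_congr rfl fun t ht => ?_
      have htd := Finset.mem_range.mp ht
      rw [mul_pow, hfixK1, ← pow_mul, ← pow_succ,
          show d - 1 - t + 1 = d - t from by omega]
    rw [h1, hA, Finset.mul_sum]
    rw [show d = (d - 1) + 1 from by omega]
    rw [Finset.sum_range_succ' (fun t => algebraMap K L (ω ^ (i * t)) * x ^ q ^ ((d - 1) + 1 - t)) (d - 1)]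
    rw [Finset.sum_range_succ (fun t => algebraMap K L (ω ^ i) *
      (algebraMap K L (ω ^ (i * t)) * x ^ q ^ ((d - 1) + 1 - 1 - t))) (d - 1)]
    congr 1
    · refine Finset.sum_congr rfl fun t _ => ?_
      rw [show (d - 1) + 1 - (t + 1) = (d - 1) + 1 - 1 - t from by omega,
          show i * (t + 1) = i + i * t from by ring,
          pow_add, map_mul, mul_assoc]
    · rw [show i * 0 = 0 from by ring, pow_zero, map_one, one_mul,
          show (d - 1) + 1 - 0 = (d - 1) + 1 from by omega,
          show (d - 1) + 1 - 1 - (d - 1) = 0 from by omega,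
          show (d - 1) + 1 = d from by omega, hfixL, pow_zero, pow_one,
          ← mul_assoc, ← map_mul, ← pow_add]
      rw [hωone (i + i * (d - 1)) ?_, map_one, one_mul]
      have h2 : i + i * (d - 1) = i * d := by
        calc i + i * (d - 1) = i * ((d - 1) + 1) := by ring
          _ = i * d := by rw [show (d - 1) + 1 = d from by omega]
      rw [h2, Nat.mul_mod_left]
  have heigpow : ∀ (k : ℕ) (z : L), z ^ q = algebraMap K L (ω ^ k) * z →
      ∀ s : ℕ, z ^ q ^ s = algebraMap K L (ω ^ (k * s)) * z := by
    intro k z hz s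
    induction s with
    | zero => simp
    | succ s ih =>
      have h1 : z ^ q ^ (s + 1) = (z ^ q ^ s) ^ q := by rw [← pow_mul, ← pow_succ]
      rw [h1, ih, mul_pow, hz, hfixK1, ← mul_assoc, ← map_mul, ← pow_add, Nat.mul_succ]
  -- geometric sums
  have hgeom : ∀ e : ℕ, (∑ t ∈ Finset.range d, (algebraMap K L (ω ^ e)) ^ t) =
      if e % d = 0 then (d : L) else 0 := by
    intro e
    by_cases h : e % d = 0
    · rw [if_pos h, hωone e h]
      simp
    · rw [if_neg h]
      have hζ : algebraMap K L (ω ^ e) ≠ 1 := by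
        intro hc
        apply h
        have h1 : ω ^ e = 1 := by
          apply (algebraMap K L).injective
          rw [hc, map_one]
        have h2 : ω ^ e = ω ^ 0 := by simpa using h1
        simpa using hωmod' e 0 h2
      rw [geom_sum_eq hζ]
      have h2 : (algebraMap K L (ω ^ e)) ^ d = 1 := by
        rw [← map_pow, ← pow_mul, hωone (e * d) (Nat.mul_mod_left e d), map_one]
      rw [h2, sub_self, zero_div]
  -- modular condition
  have hcond : ∀ jj k : ℕ, ((jj + k * (d - 1)) % d = 0 ↔ jj % d = k % d) := by
    intro jj k
    have e1 : jj + k * (d - 1) + k = jj + k * d := by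
      have h2 : k * (d - 1) + k = k * d := by
        calc k * (d - 1) + k = k * ((d - 1) + 1) := by ring
          _ = k * d := by rw [show (d - 1) + 1 = d from by omega]
      omega
    constructor
    · intro h
      have h1 : ω ^ (jj + k * (d - 1)) = 1 := hωone _ h
      have h2 : ω ^ (jj + k * d) = ω ^ k := by
        rw [← e1, pow_add, h1, one_mul]
      have h3 := hωmod' _ _ h2
      rwa [Nat.add_mul_mod_self_right] at h3
    · intro h
      have h2 : ω ^ (jj + k * d) = ω ^ k := hωmod _ _ (by rw [Nat.add_mul_mod_self_right]; exact h)
      have h1 : ω ^ (jj + k * (d - 1)) * ω ^ k = 1 * ω ^ k := by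
        rw [← pow_add, e1, h2, one_mul]
      have h4 := mul_right_cancel₀ (pow_ne_zero _ hωne) h1
      have h5 := hωmod' (jj + k * (d - 1)) 0 (by simpa using h4)
      simpa using h5
  -- key lemma
  have hkey : ∀ (jj k : ℕ) (z : L), z ^ q = algebraMap K L (ω ^ k) * z →
      A jj z = if jj % d = k % d then (d : L) * algebraMap K L (ω ^ (k * (d - 1))) * z else 0 := by
    intro jj k z hz
    have hterm : ∀ t ∈ Finset.range d, algebraMap K L (ω ^ (jj * t)) * z ^ q ^ (d - 1 - t)
        = algebraMap K L (ω ^ (k * (d - 1))) * (algebraMap K L (ω ^ (jj + k * (d - 1)))) ^ t * z := by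
      intro t ht
      have htd := Finset.mem_range.mp ht
      rw [heigpow k z hz (d - 1 - t), ← map_pow, ← mul_assoc, ← map_mul, ← map_mul,
         ← pow_add, ← pow_mul, ← pow_add]
      congr 2
      apply hωmod
      have hexp : jj * t + k * (d - 1 - t) + d * (k * t) = k * (d - 1) + (jj + k * (d - 1)) * t := by
        obtain ⟨t', ht'⟩ : ∃ t', d - 1 = t + t' := ⟨d - 1 - t, by omega⟩
        have h2 : d - 1 - t = t' := by omega
        have h3 : d = t + t' + 1 := by omega
        rw [h2, ht', h3]
        ring
      rw [← hexp, Nat.add_mul_mod_self_left]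
    calc A jj z = ∑ t ∈ Finset.range d, algebraMap K L (ω ^ (jj * t)) * z ^ q ^ (d - 1 - t) := hA jj z
      _ = ∑ t ∈ Finset.range d, algebraMap K L (ω ^ (k * (d - 1))) *
            (algebraMap K L (ω ^ (jj + k * (d - 1)))) ^ t * z := Finset.sum_congr rfl hterm
      _ = algebraMap K L (ω ^ (k * (d - 1))) *
            (∑ t ∈ Finset.range d, (algebraMap K L (ω ^ (jj + k * (d - 1)))) ^ t) * z := by
          rw [Finset.mul_sum, Finset.sum_mul]
      _ = if jj % d = k % d then (d : L) * algebraMap K L (ω ^ (k * (d - 1))) * z else 0 := by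
          rw [hgeom]
          by_cases hc : jj % d = k % d
          · rw [if_pos ((hcond jj k).mpr hc), if_pos hc]
            ring
          · rw [if_neg (fun hcc => hc ((hcond jj k).mp hcc)), if_neg hc, mul_zero, zero_mul]
  -- the q-power map fixes aeval values
  have hΨ1 : ∀ y : L, iterateFrobenius L p (n : ℕ) y = y ^ q := by
    intro y; rw [iterateFrobenius_def, hcard]
  have hwfix : ∀ x : L, (Polynomial.aeval (A 0 x) g) ^ q = Polynomial.aeval (A 0 x) g := by
    intro x
    rw [Polynomial.aeval_def, ← hΨ1, Polynomial.hom_eval₂]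
    have hc : (iterateFrobenius L p (n : ℕ)).comp (algebraMap K L) = algebraMap K L :=
      RingHom.ext fun c => by rw [RingHom.comp_apply, hΨ1, hfixK1]
    have hz : iterateFrobenius L p (n : ℕ) (A 0 x) = A 0 x := by
      rw [hΨ1, heig, pow_zero, map_one, one_mul]
    rw [hc, hz, ← Polynomial.aeval_def]
  have hweig : ∀ x : L, (Polynomial.aeval (A 0 x) g) ^ q
      = algebraMap K L (ω ^ 0) * Polynomial.aeval (A 0 x) g := by
    intro x
    rw [pow_zero, map_one, one_mul, hwfix]
  -- eigenvalue of monomial terms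
  have hterm_eig : ∀ t (x : L), (A t x ^ m t) ^ q = algebraMap K L (ω ^ (t * m t)) * A t x ^ m t := by
    intro t x
    calc (A t x ^ m t) ^ q = (A t x ^ q) ^ m t := by rw [← pow_mul, ← pow_mul, mul_comm]
      _ = algebraMap K L (ω ^ (t * m t)) * A t x ^ m t := by
          rw [heig, mul_pow, ← map_pow, ← pow_mul]
  -- decomposition of A jj (f x)
  have hAf : ∀ (jj : ℕ) (x : L), A jj (f x) =
      A jj (Polynomial.aeval (A 0 x) g) +
        ∑ t ∈ Finset.Icc 1 (d - 1), algebraMap K L (u t) * A jj (A t x ^ m t) := by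
    intro jj x
    rw [hf, hAadd, hAsum]
    congr 1
    exact Finset.sum_congr rfl fun t _ => hAsmul jj (u t) _
  -- A 0 of f x
  have hA0f : ∀ x, A 0 (f x) = (d : L) * Polynomial.aeval (A 0 x) g := by
    intro x
    rw [hAf]
    have h1 : A 0 (Polynomial.aeval (A 0 x) g)
        = (d : L) * algebraMap K L (ω ^ (0 * (d - 1))) * Polynomial.aeval (A 0 x) g := by
      rw [hkey 0 0 _ (hweig x), if_pos rfl]
    have h2 : ∀ t ∈ Finset.Icc 1 (d - 1), algebraMap K L (u t) * A 0 (A t x ^ m t) = 0 := by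
      intro t ht
      rw [hkey 0 (t * m t) _ (hterm_eig t x), if_neg, mul_zero]
      intro hcm
      obtain ⟨ht1, ht2⟩ := Finset.mem_Icc.mp ht
      have htd : t < d := by omega
      have heq : (fun i : Fin d => (((i : ℕ) * m (i : ℕ) : ℕ) : ZMod d)) ⟨0, by omega⟩
          = (fun i : Fin d => (((i : ℕ) * m (i : ℕ) : ℕ) : ZMod d)) ⟨t, htd⟩ := by
        show (((0 * m 0 : ℕ)) : ZMod d) = (((t * m t : ℕ)) : ZMod d)
        rw [ZMod.natCast_eq_natCast_iff']
        simpa using hcm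
      have := hcrs.injective heq
      simp only [Fin.mk.injEq] at this
      omega
    rw [Finset.sum_eq_zero h2, add_zero, h1, Nat.zero_mul, pow_zero, map_one, mul_one]
  -- A (j i) of f x
  have hAjf : ∀ i, 1 ≤ i → i ≤ d - 1 → ∀ x : L,
      A (j i) (f x) = algebraMap K L (u i) *
        ((d : L) * algebraMap K L (ω ^ ((i * m i) * (d - 1))) * A i x ^ m i) := by
    intro i hi1 hi2 x
    rw [hAf]
    obtain ⟨hj1, hj2, hj3⟩ := hj i hi1 hi2
    have hjmod : j i % d = (i * m i) % d := (ZMod.natCast_eq_natCast_iff' _ _ _).mp hj3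
    have hg0 : A (j i) (Polynomial.aeval (A 0 x) g) = 0 := by
      rw [hkey _ 0 _ (hweig x), if_neg]
      rw [Nat.zero_mod, Nat.mod_eq_of_lt (by omega)]
      omega
    rw [hg0, zero_add]
    rw [Finset.sum_eq_single i]
    · rw [hkey _ (i * m i) _ (hterm_eig i x), if_pos hjmod]
    · intro t ht htne
      rw [hkey _ (t * m t) _ (hterm_eig t x), if_neg, mul_zero]
      intro hcm
      obtain ⟨ht1, ht2⟩ := Finset.mem_Icc.mp ht
      have heq : (fun i : Fin d => (((i : ℕ) * m (i : ℕ) : ℕ) : ZMod d)) ⟨t, by omega⟩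
          = (fun i : Fin d => (((i : ℕ) * m (i : ℕ) : ℕ) : ZMod d)) ⟨i, by omega⟩ := by
        show (((t * m t : ℕ)) : ZMod d) = (((i * m i : ℕ)) : ZMod d)
        rw [ZMod.natCast_eq_natCast_iff']
        omega
      have := hcrs.injective heq
      simp only [Fin.mk.injEq] at this
      exact htne this
    · intro hni
      exact absurd (Finset.mem_Icc.mpr ⟨hi1, hi2⟩) hni
  -- A 0 x lands in the image of K
  have hA0range : ∀ x : L, ∃ c : K, algebraMap K L c = A 0 x := by
    intro x
    have hfix : (A 0 x) ^ q = A 0 x := by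
      rw [heig, pow_zero, map_one, one_mul]
    have hPne : (Polynomial.X ^ q - Polynomial.X : Polynomial L) ≠ 0 := by
      apply sub_ne_zero_of_ne
      intro h
      have := congrArg Polynomial.natDegree h
      rw [Polynomial.natDegree_X_pow, Polynomial.natDegree_X] at this
      omega
    set T : Finset L := Finset.univ.filter (fun z : L => z ^ q = z) with hT
    have himg : Finset.univ.image (algebraMap K L) ⊆ T := by
      intro z hz
      simp only [Finset.mem_image] at hz
      obtain ⟨c, _, rfl⟩ := hz
      simp only [hT, Finset.mem_filter, Finset.mem_univ, true_and]
      exact hfixK1 c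
    have hcardT : T.card ≤ q := by
      have hsub : T ⊆ (Polynomial.X ^ q - Polynomial.X : Polynomial L).roots.toFinset := by
        intro z hz
        simp only [hT, Finset.mem_filter, Finset.mem_univ, true_and] at hz
        rw [Multiset.mem_toFinset, Polynomial.mem_roots hPne]
        simp [Polynomial.IsRoot, sub_eq_zero, hz]
      calc T.card ≤ _ := Finset.card_le_card hsub
        _ ≤ Multiset.card (Polynomial.X ^ q - Polynomial.X : Polynomial L).roots :=
            Multiset.toFinset_card_le _
        _ ≤ (Polynomial.X ^ q - Polynomial.X : Polynomial L).natDegree := Polynomial.card_roots' _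
        _ ≤ q := by
            refine le_trans (Polynomial.natDegree_sub_le _ _) ?_
            rw [Polynomial.natDegree_X_pow, Polynomial.natDegree_X]
            omega
    have hcardimg : (Finset.univ.image (algebraMap K L)).card = q := by
      rw [Finset.card_image_of_injective _ (algebraMap K L).injective, Finset.card_univ]
    have hTeq : Finset.univ.image (algebraMap K L) = T :=
      Finset.eq_of_subset_of_card_le himg (by rw [hcardimg]; exact hcardT)
    have hmem : A 0 x ∈ T := by
      simp only [hT, Finset.mem_filter, Finset.mem_univ, true_and]
      exact hfix
    rw [← hTeq] at hmem
    simpa [Finset.mem_image, eq_comm] using hmem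
  -- power reduction
  have hpowred : ∀ i, 1 ≤ i → i ≤ d - 1 → ∀ z : L,
      z ^ q = algebraMap K L (ω ^ i) * z → z ^ (m i * r i) = z := by
    intro i hi1 hi2 z hz
    obtain ⟨hr1, hr2⟩ := hr i hi1 hi2
    have hm1 := hm i hi1 hi2
    by_cases hz0 : z = 0
    · subst hz0
      rw [zero_pow (Nat.mul_pos hm1 hr1).ne']
    · have hz1 : z ^ (q - 1) = algebraMap K L (ω ^ i) := by
        have h1 : z ^ (q - 1) * z = algebraMap K L (ω ^ i) * z := by
          rw [← pow_succ, show q - 1 + 1 = q from by omega, hz]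
        exact mul_right_cancel₀ hz0 h1
      have hzN : z ^ (d * (q - 1)) = 1 := by
        rw [mul_comm d, pow_mul, hz1, ← map_pow, ← pow_mul,
            hωone (i * d) (Nat.mul_mod_left i d), map_one]
      have hN2 : 1 < d * (q - 1) := by
        have h1 : 1 ≤ q - 1 := by omega
        calc 1 < d := hd
          _ = d * 1 := (mul_one d).symm
          _ ≤ d * (q - 1) := Nat.mul_le_mul_left d h1
      have hmr : m i * r i = d * (q - 1) * (m i * r i / (d * (q - 1))) + 1 := by
        conv_lhs => rw [← Nat.div_add_mod (m i * r i) (d * (q - 1))]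
        rw [hr2, Nat.mod_eq_of_lt hN2]
      calc z ^ (m i * r i) = z ^ (d * (q - 1) * (m i * r i / (d * (q - 1))) + 1) := by rw [← hmr]
        _ = (z ^ (d * (q - 1))) ^ (m i * r i / (d * (q - 1))) * z := by
            rw [pow_add, pow_mul, pow_one]
        _ = z := by rw [hzN, one_pow, one_mul]
  -- summation identity
  have hsumAll : ∀ x : L, (∑ i ∈ Finset.range d, algebraMap K L (ω ^ i) * A i x) = (d : L) * x := by
    intro x
    have h1 : ∀ i ∈ Finset.range d, algebraMap K L (ω ^ i) * A i x
        = ∑ t ∈ Finset.range d, (algebraMap K L (ω ^ (t + 1))) ^ i * x ^ q ^ (d - 1 - t) := by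
      intro i _
      rw [hA, Finset.mul_sum]
      refine Finset.sum_congr rfl fun t _ => ?_
      rw [← mul_assoc, ← map_mul, ← pow_add, ← map_pow, ← pow_mul,
          show (t + 1) * i = i + i * t from by ring]
    rw [Finset.sum_congr rfl h1, Finset.sum_comm]
    have h2 : ∀ t ∈ Finset.range d,
        (∑ i ∈ Finset.range d, (algebraMap K L (ω ^ (t + 1))) ^ i * x ^ q ^ (d - 1 - t))
        = (if (t + 1) % d = 0 then (d : L) else 0) * x ^ q ^ (d - 1 - t) := by
      intro t _
      rw [← Finset.sum_mul, hgeom]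
    rw [Finset.sum_congr rfl h2]
    rw [Finset.sum_eq_single (d - 1)]
    · rw [if_pos (by rw [show d - 1 + 1 = d from by omega, Nat.mod_self]),
          show d - 1 - (d - 1) = 0 from by omega, pow_zero, pow_one]
    · intro t ht htne
      rw [if_neg, zero_mul]
      intro hc
      have htd := Finset.mem_range.mp ht
      have h3 := Nat.le_of_dvd (by omega) (Nat.dvd_of_mod_eq_zero hc)
      omega
    · intro h
      exact absurd (Finset.mem_range.mpr (by omega)) h
  -- left inverse
  have hleft : Function.LeftInverse finv f := by
    intro x
    rw [hfinvdef]
    obtain ⟨c0, hc0⟩ := hA0range x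
    have hwval : Polynomial.aeval (A 0 (f x) / (d : L)) ginv = A 0 x := by
      rw [hA0f, mul_div_cancel_left₀ _ hdL, ← hc0,
          Polynomial.aeval_algebraMap_apply_eq_algebraMap_eval,
          Polynomial.aeval_algebraMap_apply_eq_algebraMap_eval, hginv]
    have hterm : ∀ i ∈ Finset.Icc 1 (d - 1),
        algebraMap K L (ω ^ i) * (algebraMap K L ((d : K) * u i * (ω ^ (j i))⁻¹))⁻¹ ^ r i *
          A (j i) (f x) ^ r i
        = algebraMap K L (ω ^ i) * A i x := by
      intro i hi
      obtain ⟨hi1, hi2⟩ := Finset.mem_Icc.mp hi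
      obtain ⟨hj1, hj2, hj3⟩ := hj i hi1 hi2
      have hjmod : j i % d = (i * m i) % d := (ZMod.natCast_eq_natCast_iff' _ _ _).mp hj3
      have hinv : (ω ^ (j i))⁻¹ = ω ^ ((i * m i) * (d - 1)) := by
        apply inv_eq_of_mul_eq_one_right
        rw [← pow_add]
        apply hωone
        have h1 : (j i + i * m i * (d - 1)) % d = (i * m i + i * m i * (d - 1)) % d := by
          rw [Nat.add_mod, hjmod, ← Nat.add_mod]
        rw [h1]
        have h2 : i * m i + i * m i * (d - 1) = (i * m i) * d := by
          calc i * m i + i * m i * (d - 1) = i * m i * ((d - 1) + 1) := by ring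
            _ = i * m i * d := by rw [show (d - 1) + 1 = d from by omega]
        rw [h2, Nat.mul_mod_left]
      have hcne : ((d : K) * u i * (ω ^ (j i))⁻¹) ≠ 0 :=
        mul_ne_zero (mul_ne_zero hdK (hu i hi1 hi2)) (inv_ne_zero (pow_ne_zero _ hωne))
      have hcL : (algebraMap K L) ((d : K) * u i * (ω ^ (j i))⁻¹) ≠ 0 :=
        fun h => hcne ((map_eq_zero_iff _ (algebraMap K L).injective).mp h)
      have hAval : A (j i) (f x)
          = algebraMap K L ((d : K) * u i * (ω ^ (j i))⁻¹) * A i x ^ m i := by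
        rw [hAjf i hi1 hi2 x, hinv, map_mul, map_mul, map_natCast]
        ring
      rw [hAval, mul_pow]
      calc algebraMap K L (ω ^ i) * (algebraMap K L ((d : K) * u i * (ω ^ (j i))⁻¹))⁻¹ ^ r i *
            ((algebraMap K L ((d : K) * u i * (ω ^ (j i))⁻¹)) ^ r i * (A i x ^ m i) ^ r i)
          = algebraMap K L (ω ^ i) *
            (((algebraMap K L ((d : K) * u i * (ω ^ (j i))⁻¹))⁻¹ *
              algebraMap K L ((d : K) * u i * (ω ^ (j i))⁻¹)) ^ r i * A i x ^ (m i * r i)) := by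
            rw [mul_pow, ← pow_mul]
            ring
        _ = algebraMap K L (ω ^ i) * A i x := by
            rw [inv_mul_cancel₀ hcL, one_pow, one_mul, hpowred i hi1 hi2 _ (heig i x)]
    rw [Finset.sum_congr rfl hterm, hwval]
    have hins : Finset.range d = insert 0 (Finset.Icc 1 (d - 1)) := by
      ext t
      simp only [Finset.mem_range, Finset.mem_insert, Finset.mem_Icc]
      omega
    have hsum := hsumAll x
    rw [hins, Finset.sum_insert (by simp)] at hsum
    rw [pow_zero, map_one, one_mul] at hsum
    rw [hsum, inv_mul_cancel_left₀ hdL]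
  exact ⟨hleft, fun y => by
    obtain ⟨x, rfl⟩ := hfbij.surjective y
    rw [hleft x]⟩
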